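/- arXiv:math/0104246 — 4 statements merged into one kernel-verified Lean document; each statement's English description precedes it below -/
import Mathlib

section
/- Let H be a Hilbert space, T : H → H a bounded linear operator, and M a closed subspace of H that is invariant under T (i.e. T(M) ⊆ M). Suppose the orthogonal complement of the closure of T(M) in M has dimension k < ∞. Then for every natural number l, the orthogonal complement of the closure of T^l(M) in M has dimension at most l·k. -/
open Submodule

section Aux

variable {H : Type*} [NormedAddCommGroup H] [InnerProductSpace ℂ H] [CompleteSpace H]

/-- The closure of the image of `M` under `T^l`. -/
noncomputable def auxA (T : H →L[ℂ] H) (M : Submodule ℂ H) (l : ℕ) : Submodule ℂ H :=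
  (M.map ((T ^ l : H →L[ℂ] H) : H →ₗ[ℂ] H)).topologicalClosure

lemma auxA_succ_map (T : H →L[ℂ] H) (M : Submodule ℂ H) (l : ℕ) :
    M.map ((T ^ (l + 1) : H →L[ℂ] H) : H →ₗ[ℂ] H)
      = (M.map ((T ^ l : H →L[ℂ] H) : H →ₗ[ℂ] H)).map (T : H →ₗ[ℂ] H) := by
  rw [pow_succ' T l, ← Submodule.map_comp]
  rfl

lemma auxA_succ_map' (T : H →L[ℂ] H) (M : Submodule ℂ H) (l : ℕ) :
    M.map ((T ^ (l + 1) : H →L[ℂ] H) : H →ₗ[ℂ] H)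
      = (M.map (T : H →ₗ[ℂ] H)).map ((T ^ l : H →L[ℂ] H) : H →ₗ[ℂ] H) := by
  rw [pow_succ T l, ← Submodule.map_comp]
  rfl

lemma map_le_self (T : H →L[ℂ] H) (M : Submodule ℂ H) (hMinv : ∀ x ∈ M, T x ∈ M) (l : ℕ) :
    M.map ((T ^ l : H →L[ℂ] H) : H →ₗ[ℂ] H) ≤ M := by
  induction l with
  | zero => simp [pow_zero, ContinuousLinearMap.one_def, Submodule.map_id]
  | succ l ih =>
      rw [auxA_succ_map]
      rintro x ⟨y, hy, rfl⟩
      exact hMinv y (ih hy)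

lemma auxA_le_M (T : H →L[ℂ] H) (M : Submodule ℂ H) (hMc : IsClosed (M : Set H))
    (hMinv : ∀ x ∈ M, T x ∈ M) (l : ℕ) : auxA T M l ≤ M :=
  Submodule.topologicalClosure_minimal _ (map_le_self T M hMinv l) hMc

lemma auxA_antitone (T : H →L[ℂ] H) (M : Submodule ℂ H) (hMinv : ∀ x ∈ M, T x ∈ M) (l : ℕ) :
    auxA T M (l + 1) ≤ auxA T M l := by
  apply Submodule.topologicalClosure_mono
  rw [auxA_succ_map']
  apply Submodule.map_mono
  rintro x ⟨y, hy, rfl⟩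
  exact hMinv y hy

lemma map_auxA_le (T : H →L[ℂ] H) (M : Submodule ℂ H) (l : ℕ) :
    (auxA T M l).map (T : H →ₗ[ℂ] H) ≤ auxA T M (l + 1) := by
  refine le_trans (Submodule.topologicalClosure_map T _) ?_
  rw [auxA, ← auxA_succ_map]

/-- The defect space `cl(T^l M) ⊖ cl(T^{l+1} M)`. -/
noncomputable def auxD (T : H →L[ℂ] H) (M : Submodule ℂ H) (l : ℕ) : Submodule ℂ H :=
  auxA T M l ⊓ (auxA T M (l + 1))ᗮ

lemma auxD_isClosed (T : H →L[ℂ] H) (M : Submodule ℂ H) (l : ℕ) :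
    IsClosed ((auxD T M l : Submodule ℂ H) : Set H) := by
  have h1 : IsClosed ((auxA T M l : Submodule ℂ H) : Set H) :=
    Submodule.isClosed_topologicalClosure _
  have h2 : IsClosed (((auxA T M (l + 1))ᗮ : Submodule ℂ H) : Set H) :=
    Submodule.isClosed_orthogonal _
  have : ((auxD T M l : Submodule ℂ H) : Set H)
      = ((auxA T M l : Submodule ℂ H) : Set H) ∩ (((auxA T M (l + 1))ᗮ : Submodule ℂ H) : Set H) :=
    rfl
  rw [this]
  exact h1.inter h2

/-- Every element of `A l` decomposes into `D l ⊔ A (l+1)`. -/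
lemma auxA_le_sup (T : H →L[ℂ] H) (M : Submodule ℂ H) (hMinv : ∀ x ∈ M, T x ∈ M) (l : ℕ) :
    auxA T M l ≤ auxD T M l ⊔ auxA T M (l + 1) := by
  haveI : CompleteSpace (auxA T M (l + 1)) :=
    (Submodule.isClosed_topologicalClosure _).completeSpace_coe
  intro x hx
  set y := (orthogonalProjection (auxA T M (l + 1)) x : H) with hy
  have hyA : y ∈ auxA T M (l + 1) := (orthogonalProjection (auxA T M (l + 1)) x).2
  have hz : x - y ∈ (auxA T M (l + 1))ᗮ := Submodule.sub_starProjection_mem_orthogonal x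
  have hzA : x - y ∈ auxA T M l := Submodule.sub_mem _ hx (auxA_antitone T M hMinv l hyA)
  rw [show x = (x - y) + y by abel]
  exact Submodule.add_mem _ (Submodule.mem_sup_left ⟨hzA, hz⟩)
    (Submodule.mem_sup_right hyA)

lemma auxD_rank_succ_le (T : H →L[ℂ] H) (M : Submodule ℂ H) (hMinv : ∀ x ∈ M, T x ∈ M) (l : ℕ)
    (hfin : Module.rank ℂ (auxD T M l) < Cardinal.aleph0) :
    Module.rank ℂ (auxD T M (l + 1)) ≤ Module.rank ℂ (auxD T M l) := by
  haveI : CompleteSpace (auxD T M (l + 1)) := (auxD_isClosed T M (l + 1)).completeSpace_coe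
  set D1 := auxD T M (l + 1) with hD1
  set P : H →L[ℂ] H := D1.subtypeL.comp (orthogonalProjection D1) with hP
  set φ : H →L[ℂ] H := P.comp T with hφ
  set S := (auxD T M l).map (φ : H →ₗ[ℂ] H) with hS
  have hrankS : Module.rank ℂ S ≤ Module.rank ℂ (auxD T M l) := rank_map_le _ _
  -- φ kills A (l+1)
  have hkill : ∀ x ∈ auxA T M (l + 1), φ x = 0 := by
    intro x hx
    have hTx : T x ∈ auxA T M (l + 2) := map_auxA_le T M (l + 1) ⟨x, hx, rfl⟩
    have hTx' : T x ∈ D1ᗮ := by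
      have hD1le : D1 ≤ (auxA T M (l + 2))ᗮ := inf_le_right
      exact (le_trans (Submodule.le_orthogonal_orthogonal _)
        (Submodule.orthogonal_le hD1le)) hTx
    show P (T x) = 0
    have h0 : orthogonalProjection D1 (T x) = 0 :=
      orthogonalProjection_mem_subspace_orthogonalComplement_eq_zero hTx'
    show (D1.subtypeL (orthogonalProjection D1 (T x)) : H) = 0
    rw [h0]
    simp
  -- the image of A l under φ lands in S
  have hφA : (auxA T M l).map (φ : H →ₗ[ℂ] H) ≤ S := by
    refine le_trans (Submodule.map_mono (auxA_le_sup T M hMinv l)) ?_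
    rw [Submodule.map_sup]
    refine sup_le le_rfl ?_
    rintro _ ⟨y, hy, rfl⟩
    show φ y ∈ S
    rw [hkill y hy]
    exact S.zero_mem
  -- S is finite dimensional, hence closed
  have hfinS : FiniteDimensional ℂ S :=
    Module.rank_lt_aleph0_iff.mp (lt_of_le_of_lt hrankS hfin)
  have hSclosed : IsClosed (S : Set H) := S.closed_of_finiteDimensional
  -- D1 is contained in the closure of S, hence in S
  have hdense : D1 ≤ S := by
    intro d hd
    have hdA : d ∈ auxA T M (l + 1) := hd.1
    have hPd : P d = d := by
      show (D1.subtypeL (orthogonalProjection D1 d) : H) = d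
      exact Submodule.starProjection_eq_self_iff.2 hd
    have hmem : d ∈ (auxA T M (l + 1)).map (P : H →ₗ[ℂ] H) := ⟨d, hdA, hPd⟩
    have hchain : (auxA T M (l + 1)).map (P : H →ₗ[ℂ] H)
        ≤ ((M.map ((T ^ (l + 1) : H →L[ℂ] H) : H →ₗ[ℂ] H)).map (P : H →ₗ[ℂ] H)).topologicalClosure :=
      Submodule.topologicalClosure_map P _
    have heq : (M.map ((T ^ (l + 1) : H →L[ℂ] H) : H →ₗ[ℂ] H)).map (P : H →ₗ[ℂ] H)
        = (M.map ((T ^ l : H →L[ℂ] H) : H →ₗ[ℂ] H)).map (φ : H →ₗ[ℂ] H) := by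
      rw [auxA_succ_map, ← Submodule.map_comp, hφ]
      rfl
    have hle : (M.map ((T ^ l : H →L[ℂ] H) : H →ₗ[ℂ] H)).map (φ : H →ₗ[ℂ] H) ≤ S :=
      le_trans (Submodule.map_mono (Submodule.le_topologicalClosure _)) hφA
    have : d ∈ S.topologicalClosure := by
      refine Submodule.topologicalClosure_mono hle ?_
      rw [← heq]
      exact hchain hmem
    rwa [hSclosed.submodule_topologicalClosure_eq] at this
  exact le_trans (Submodule.rank_mono hdense) hrankS

theorem stmt0_defect (T : H →L[ℂ] H) (M : Submodule ℂ H) (hMc : IsClosed (M : Set H))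
    (hMinv : ∀ x ∈ M, T x ∈ M) (k : ℕ)
    (hk : Module.rank ℂ ↥(M ⊓ ((M.map (T : H →ₗ[ℂ] H)).topologicalClosure)ᗮ) = k) :
    ∀ l : ℕ, Module.rank ℂ (auxD T M l) ≤ k := by
  have h0 : auxA T M 0 = M := by
    have : M.map ((T ^ 0 : H →L[ℂ] H) : H →ₗ[ℂ] H) = M := by
      simp [pow_zero, ContinuousLinearMap.one_def, Submodule.map_id]
    rw [auxA, this, hMc.submodule_topologicalClosure_eq]
  have h1 : auxA T M 1 = (M.map (T : H →ₗ[ℂ] H)).topologicalClosure := by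
    rw [auxA, pow_one]
  intro l
  induction l with
  | zero =>
      rw [auxD, h0, h1, hk]
  | succ l ih =>
      refine le_trans (auxD_rank_succ_le T M hMinv l ?_) ih
      exact lt_of_le_of_lt ih (Cardinal.nat_lt_aleph0 k)

end Aux

/-- If `T` is a bounded operator on a complex Hilbert space `H` and `M` is a
closed `T`-invariant subspace with `dim (M ⊖ cl(T M)) = k < ∞`, then for every `l`,
`dim (M ⊖ cl(T^l M)) ≤ l * k`. -/
theorem stmt0
    {H : Type*} [NormedAddCommGroup H] [InnerProductSpace ℂ H] [CompleteSpace H]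
    (T : H →L[ℂ] H) (M : Submodule ℂ H) (hMc : IsClosed (M : Set H))
    (hMinv : ∀ x ∈ M, T x ∈ M) (k : ℕ)
    (hk : Module.rank ℂ ↥(M ⊓ ((M.map (T : H →ₗ[ℂ] H)).topologicalClosure)ᗮ) = k) :
    ∀ l : ℕ,
      Module.rank ℂ ↥(M ⊓ ((M.map ((T ^ l : H →L[ℂ] H) : H →ₗ[ℂ] H)).topologicalClosure)ᗮ)
        ≤ (l * k : ℕ) := by
  have h0 : auxA T M 0 = M := by
    have : M.map ((T ^ 0 : H →L[ℂ] H) : H →ₗ[ℂ] H) = M := by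
      simp [pow_zero, ContinuousLinearMap.one_def, Submodule.map_id]
    rw [auxA, this, hMc.submodule_topologicalClosure_eq]
  intro l
  show Module.rank ℂ (M ⊓ (auxA T M l)ᗮ : Submodule ℂ H) ≤ (l * k : ℕ)
  induction l with
  | zero =>
      rw [h0, Submodule.inf_orthogonal_eq_bot]
      simp
  | succ l ih =>
      -- N (l+1) ≤ N l ⊔ D l
      haveI : CompleteSpace (auxA T M l) :=
        (Submodule.isClosed_topologicalClosure _).completeSpace_coe
      have hsub : (M ⊓ (auxA T M (l + 1))ᗮ : Submodule ℂ H)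
          ≤ (M ⊓ (auxA T M l)ᗮ) ⊔ auxD T M l := by
        rintro x ⟨hxM, hxO⟩
        set y := (orthogonalProjection (auxA T M l) x : H) with hy
        have hyA : y ∈ auxA T M l := (orthogonalProjection (auxA T M l) x).2
        have hz : x - y ∈ (auxA T M l)ᗮ := Submodule.sub_starProjection_mem_orthogonal x
        have hzM : x - y ∈ M := M.sub_mem hxM (auxA_le_M T M hMc hMinv l hyA)
        have hyO : y ∈ (auxA T M (l + 1))ᗮ := by
          have hxz : x - y ∈ (auxA T M (l + 1))ᗮ :=
            Submodule.orthogonal_le (auxA_antitone T M hMinv l) hz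
          rw [show y = x - (x - y) by abel]
          exact Submodule.sub_mem _ hxO hxz
        rw [show x = (x - y) + y by abel]
        exact Submodule.add_mem _
          (Submodule.mem_sup_left ⟨hzM, hz⟩)
          (Submodule.mem_sup_right ⟨hyA, hyO⟩)
      calc Module.rank ℂ (M ⊓ (auxA T M (l + 1))ᗮ : Submodule ℂ H)
          ≤ Module.rank ℂ ((M ⊓ (auxA T M l)ᗮ) ⊔ auxD T M l : Submodule ℂ H) :=
            Submodule.rank_mono hsub
        _ ≤ Module.rank ℂ (M ⊓ (auxA T M l)ᗮ : Submodule ℂ H)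
              + Module.rank ℂ (auxD T M l) :=
            Submodule.rank_add_le_rank_add_rank _ _
        _ ≤ (l * k : ℕ) + (k : ℕ) := by
            exact add_le_add ih (stmt0_defect T M hMc hMinv k hk l)
        _ = ((l + 1) * k : ℕ) := by
            rw [← Nat.cast_add]
            norm_num [Nat.succ_mul]
end

section
/- Let H be a Hilbert space, T a bounded injective operator on H, and M a closed T-invariant subspace. For each t ≥ 1, the map B_t : cl(T^{t-1}M) ⊖ cl(T^t M) → M ⊖ cl(TM) defined on elements of the form T^{t-1}x (with x ∈ M) by B_t(T^{t-1}x) = P_{M ⊖ cl(TM)}(x) is injective; in particular dim(cl(T^{t-1}M) ⊖ cl(T^t M)) ≤ dim(M ⊖ cl(TM)). -/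
/-- For an injective bounded operator `T` on a Hilbert space and a closed
`T`-invariant subspace `M`, the map `B_t` sending `T^(t-1) x` (for `x ∈ M`,
`T^(t-1) x ∈ cl(T^(t-1) M) ⊖ cl(T^t M)`) to `P_{M ⊖ cl(TM)} x` is injective; in
particular `dim (cl(T^(t-1) M) ⊖ cl(T^t M)) ≤ dim (M ⊖ cl(TM))`. -/
theorem stmt1
    {H : Type*} [NormedAddCommGroup H] [InnerProductSpace ℂ H] [CompleteSpace H]
    (T : H →L[ℂ] H) (hT : Function.Injective T)
    (M : Submodule ℂ H) (hMc : IsClosed (M : Set H))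
    (hMinv : ∀ x ∈ M, T x ∈ M) (t : ℕ) (ht : 1 ≤ t) :
    letI W : Submodule ℂ H := M ⊓ ((M.map (T : H →ₗ[ℂ] H)).topologicalClosure)ᗮ
    letI A : Submodule ℂ H :=
      (M.map ((T ^ (t - 1) : H →L[ℂ] H) : H →ₗ[ℂ] H)).topologicalClosure ⊓
        ((M.map ((T ^ t : H →L[ℂ] H) : H →ₗ[ℂ] H)).topologicalClosure)ᗮ
    letI : CompleteSpace W :=
      (hMc.inter (Submodule.isClosed_orthogonal _)).completeSpace_coe
    (∀ x ∈ M, ∀ y ∈ M, (T ^ (t - 1)) x ∈ A → (T ^ (t - 1)) y ∈ A →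
        Submodule.orthogonalProjectionOnto W x = Submodule.orthogonalProjectionOnto W y → (T ^ (t - 1)) x = (T ^ (t - 1)) y)
      ∧ Module.rank ℂ ↥A ≤ Module.rank ℂ ↥W := by
  set W : Submodule ℂ H := M ⊓ ((M.map (T : H →ₗ[ℂ] H)).topologicalClosure)ᗮ with hW
  set A : Submodule ℂ H :=
      (M.map ((T ^ (t - 1) : H →L[ℂ] H) : H →ₗ[ℂ] H)).topologicalClosure ⊓
        ((M.map ((T ^ t : H →L[ℂ] H) : H →ₗ[ℂ] H)).topologicalClosure)ᗮ with hA
  haveI : CompleteSpace W :=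
      (hMc.inter (Submodule.isClosed_orthogonal _)).completeSpace_coe
  set S : H →L[ℂ] H := T ^ (t - 1) with hS
  set N : Submodule ℂ H := (M.map (T : H →ₗ[ℂ] H)).topologicalClosure with hN
  set N2 : Submodule ℂ H :=
      (M.map ((T ^ t : H →L[ℂ] H) : H →ₗ[ℂ] H)).topologicalClosure with hN2
  have hST : S ∘L T = T ^ t := by
    rw [hS, ← ContinuousLinearMap.mul_def, ← pow_succ, Nat.sub_add_cancel ht]
  -- S maps N into N2
  have hSN : ∀ z ∈ N, S z ∈ N2 := by
    intro z hz
    have h1 : N.map (S : H →ₗ[ℂ] H) ≤ (M.map ((T ^ t : H →L[ℂ] H) : H →ₗ[ℂ] H)).topologicalClosure := by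
      refine le_trans (Submodule.topologicalClosure_map (f := S) _) ?_
      apply Submodule.topologicalClosure_mono
      rw [← Submodule.map_comp, ← ContinuousLinearMap.toLinearMap_comp, hST]
    exact h1 ⟨z, hz, rfl⟩
  have hNc : IsClosed (N : Set H) := Submodule.isClosed_topologicalClosure _
  haveI : CompleteSpace N := hNc.completeSpace_coe
  -- key: for x ∈ M, x - P_W x ∈ N
  have hNM : N ≤ M := Submodule.topologicalClosure_minimal _
    (Submodule.map_le_iff_le_comap.2 (fun x hx => hMinv x hx)) hMc
  have key : ∀ x ∈ M, x - (W.orthogonalProjectionOnto x : H) ∈ N := by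
    intro x hx
    have hmem : x - (N.orthogonalProjectionOnto x : H) ∈ W := by
      constructor
      · exact M.sub_mem hx (hNM (N.orthogonalProjectionOnto x).2)
      · exact N.sub_starProjection_mem_orthogonal x
    have hNW : N ≤ Wᗮ := le_trans (Submodule.le_orthogonal_orthogonal N)
      (Submodule.orthogonal_le inf_le_right)
    have heq : (W.orthogonalProjectionOnto x : H) = x - (N.orthogonalProjectionOnto x : H) :=
      Submodule.eq_starProjection_of_mem_orthogonal hmem (by
        rw [sub_sub_cancel]; exact hNW (N.orthogonalProjectionOnto x).2)
    rw [heq, sub_sub_cancel]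
    exact (N.orthogonalProjectionOnto x).2
  constructor
  · -- injectivity
    intro x hx y hy hxA hyA hPxy
    have hz : x - y - (W.orthogonalProjectionOnto (x - y) : H) ∈ N := key _ (M.sub_mem hx hy)
    have hP0 : (W.orthogonalProjectionOnto (x - y) : H) = 0 := by
      rw [map_sub, hPxy, sub_self, Submodule.coe_zero]
    rw [hP0, sub_zero] at hz
    have hSz : S (x - y) ∈ N2 := hSN _ hz
    have hSz' : S (x - y) ∈ N2ᗮ := by
      rw [map_sub]
      exact Submodule.sub_mem _ hxA.2 hyA.2
    have hz0 : S (x - y) = 0 := by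
      have := Submodule.inner_right_of_mem_orthogonal hSz hSz'
      simpa [inner_self_eq_zero] using this
    rw [map_sub, sub_eq_zero] at hz0
    exact hz0
  · -- rank inequality via adjoint
    have hAc : IsClosed (A : Set H) :=
      ((Submodule.isClosed_topologicalClosure _).inter (Submodule.isClosed_orthogonal _))
    haveI : CompleteSpace A := hAc.completeSpace_coe
    set C : W →L[ℂ] A := A.orthogonalProjectionOnto.comp (S.comp W.subtypeL) with hC
    have hinj : Function.Injective (ContinuousLinearMap.adjoint C) := by
      rw [← ContinuousLinearMap.coe_coe, ← LinearMap.ker_eq_bot]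
      rw [Submodule.eq_bot_iff]
      intro a ha
      rw [LinearMap.mem_ker, ContinuousLinearMap.coe_coe] at ha
      -- ⟪S w, a⟫ = 0 for all w ∈ W
      have h1 : ∀ w : W, (inner ℂ (S (w : H)) (a : H) : ℂ) = 0 := by
        intro w
        have h0 := ContinuousLinearMap.adjoint_inner_left C w a
        rw [ha, inner_zero_left] at h0
        have h2 : (inner ℂ (C w) a : ℂ) = 0 := by
          rw [← inner_conj_symm, ← h0, map_zero]
        rw [hC] at h2
        simp only [ContinuousLinearMap.comp_apply] at h2
        rwa [Submodule.coe_inner, ← Submodule.starProjection_apply, Submodule.inner_starProjection_left_eq_right,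
          Submodule.starProjection_eq_self_iff.2 a.2] at h2
      -- hence ⟪S x, a⟫ = 0 for all x ∈ M
      have h3 : ∀ x ∈ M, (inner ℂ (S x) (a : H) : ℂ) = 0 := by
        intro x hx
        have hdecomp : (inner ℂ (S x) (a : H) : ℂ)
            = inner ℂ (S ((W.orthogonalProjectionOnto x : H))) (a : H)
              + inner ℂ (S (x - (W.orthogonalProjectionOnto x : H))) (a : H) := by
          rw [← inner_add_left, ← map_add]
          congr 2
          abel
        rw [hdecomp, h1 ((W.orthogonalProjectionOnto) x)]
        have := hSN _ (key x hx)
        rw [(Submodule.mem_orthogonal N2 (a : H)).1 a.2.2 _ this]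
        ring
      -- a ∈ (M.map S)ᗮ and a ∈ closure (M.map S), so a = 0
      have h4 : (a : H) ∈ (M.map (S : H →ₗ[ℂ] H))ᗮ := by
        rw [Submodule.mem_orthogonal]
        rintro u ⟨x, hx, rfl⟩
        simp only [ContinuousLinearMap.coe_coe]
        exact h3 x hx
      have h5 : (a : H) ∈ (M.map (S : H →ₗ[ℂ] H))ᗮᗮ := by
        rw [Submodule.orthogonal_orthogonal_eq_closure]
        exact a.2.1
      have : (a : H) = 0 := by
        have := Submodule.inner_right_of_mem_orthogonal h4 h5
        simpa [inner_self_eq_zero] using this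
      exact Subtype.ext this
    exact LinearMap.rank_le_of_injective _ hinj
end

section
/- Let M be a closed submodule of the Drury–Arveson space H²_d (invariant under each coordinate multiplier), and for each j let H_{z_j} ⊂ H²_d denote the subspace of functions depending only on the variable z_j (the one-variable Hardy-type slice). If for each j the intersection M ∩ H_{z_j} contains a nonzero polynomial p_j(z_j) of degree at most A, then M has finite codimension in H²_d; indeed the quotient H²_d/M is spanned by the images of the monomials z^I with all components i_r < A. -/
open scoped ComplexConjugate

/-- The Drury–Arveson space `H²_d` on the unit ball of `ℂ^d`, presented as a reproducing
kernel Hilbert space with kernel `K(z,w) = (1 - ⟨z,w⟩)⁻¹`. -/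
structure DruryArveson (d : ℕ) (H : Type)
    [NormedAddCommGroup H] [InnerProductSpace ℂ H] [CompleteSpace H] where
  ev : H →ₗ[ℂ] ((EuclideanSpace ℂ (Fin d)) → ℂ)
  ker : EuclideanSpace ℂ (Fin d) → H
  sep : ∀ f : H, (∀ z, ‖z‖ < 1 → ev f z = 0) → f = 0
  repro : ∀ w, ‖w‖ < 1 → ∀ f : H, ev f w = inner ℂ (ker w) f
  kernel : ∀ z w : EuclideanSpace ℂ (Fin d), ‖z‖ < 1 → ‖w‖ < 1 →
    ev (ker w) z = (1 - ∑ j, z j * conj (w j))⁻¹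

namespace Stmt10Aux

open Filter Finset Submodule

variable {d : ℕ} {H : Type} [NormedAddCommGroup H] [InnerProductSpace ℂ H] [CompleteSpace H]
variable (DA : DruryArveson d H)

lemma sep_eq {f g : H} (h : ∀ z, ‖z‖ < 1 → DA.ev f z = DA.ev g z) : f = g := by
  have h0 : ∀ z, ‖z‖ < 1 → DA.ev (f - g) z = 0 := by
    intro z hz
    simp [map_sub, h z hz]
  exact sub_eq_zero.mp (DA.sep _ h0)

lemma sum_mul_conj_self (v : EuclideanSpace ℂ (Fin d)) :
    ∑ j, v j * conj (v j) = ((‖v‖ ^ 2 : ℝ) : ℂ) := by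
  have : ∀ j, v j * conj (v j) = ((‖v j‖ ^ 2 : ℝ) : ℂ) := by
    intro j
    rw [Complex.mul_conj']
    push_cast
    ring
  rw [Finset.sum_congr rfl (fun j _ => this j)]
  rw [← Complex.ofReal_sum]
  congr 1
  rw [EuclideanSpace.norm_eq, Real.sq_sqrt]
  positivity

lemma ker_norm_sq {v : EuclideanSpace ℂ (Fin d)} (hv : ‖v‖ < 1) :
    ‖DA.ker v‖ ^ 2 = (1 - ‖v‖ ^ 2)⁻¹ := by
  have h1 : (inner ℂ (DA.ker v) (DA.ker v) : ℂ) = ((1 - ‖v‖ ^ 2)⁻¹ : ℝ) := by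
    rw [← DA.repro v hv, DA.kernel v v hv hv, sum_mul_conj_self]
    push_cast
    ring_nf
  have h2 : (inner ℂ (DA.ker v) (DA.ker v) : ℂ) = (‖DA.ker v‖ : ℂ) ^ 2 :=
    inner_self_eq_norm_sq_to_K _
  rw [h2] at h1
  exact_mod_cast h1

lemma ker_norm_le {v : EuclideanSpace ℂ (Fin d)} {ρ : ℝ} (hv : ‖v‖ ≤ ρ) (hρ : ρ < 1) :
    ‖DA.ker v‖ ≤ Real.sqrt ((1 - ρ ^ 2)⁻¹) := by
  have hv1 : ‖v‖ < 1 := lt_of_le_of_lt hv hρ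
  have hρ0 : 0 ≤ ρ := le_trans (norm_nonneg _) hv
  have h1 : (0:ℝ) < 1 - ρ ^ 2 := by nlinarith
  have h2 : 1 - ρ ^ 2 ≤ 1 - ‖v‖ ^ 2 := by nlinarith [norm_nonneg v]
  have h3 : (1 - ‖v‖ ^ 2)⁻¹ ≤ (1 - ρ ^ 2)⁻¹ := by
    apply inv_anti₀ h1 h2
  have h4 : ‖DA.ker v‖ = Real.sqrt (‖DA.ker v‖ ^ 2) := by
    rw [Real.sqrt_sq (norm_nonneg _)]
  rw [h4, ker_norm_sq DA hv1]
  exact Real.sqrt_le_sqrt h3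

/-- the kernels span a dense subspace -/
lemma ker_dense :
    (span ℂ {x : H | ∃ w, ‖w‖ < 1 ∧ x = DA.ker w}).topologicalClosure = ⊤ := by
  set K := (span ℂ {x : H | ∃ w, ‖w‖ < 1 ∧ x = DA.ker w}).topologicalClosure with hK
  haveI : CompleteSpace K := by
    rw [hK]
    exact (span ℂ {x : H | ∃ w, ‖w‖ < 1 ∧ x = DA.ker w}).isClosed_topologicalClosure.completeSpace_coe
  rw [← Submodule.orthogonal_eq_bot_iff]
  rw [Submodule.eq_bot_iff]
  intro g hg
  apply DA.sep
  intro z hz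
  rw [DA.repro z hz]
  have hker : DA.ker z ∈ K :=
    Submodule.le_topologicalClosure _ (subset_span ⟨z, hz, rfl⟩)
  exact ((Submodule.mem_orthogonal _ _).mp hg) _ hker

lemma exists_approx (g : H) :
    ∃ u : ℕ → H, (∀ n, u n ∈ span ℂ {x : H | ∃ w, ‖w‖ < 1 ∧ x = DA.ker w}) ∧
      Tendsto u atTop (nhds g) := by
  have hg : g ∈ closure ((span ℂ {x : H | ∃ w, ‖w‖ < 1 ∧ x = DA.ker w}) : Set H) := by
    have : g ∈ (span ℂ {x : H | ∃ w, ‖w‖ < 1 ∧ x = DA.ker w}).topologicalClosure := by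
      rw [ker_dense DA]; trivial
    rw [← Submodule.topologicalClosure_coe]; exact this
  exact mem_closure_iff_seq_limit.mp hg


/-- analytic continuation: vanishing of `ev g` on a small ball propagates to the unit ball -/
lemma eq_zero_of_ev_small {ε : ℝ} (hε : 0 < ε) (g : H)
    (h0 : ∀ w : EuclideanSpace ℂ (Fin d), ‖w‖ < ε → DA.ev g w = 0) : g = 0 := by
  apply DA.sep
  intro w hw
  by_cases hsm : ‖w‖ < ε
  · exact h0 w hsm
  push_neg at hsm
  have hw0 : 0 < ‖w‖ := lt_of_lt_of_le hε hsm
  set R : ℝ := ‖w‖⁻¹ with hRdef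
  have hR1 : 1 < R := by
    rw [hRdef]
    rw [lt_inv_comm₀ one_pos hw0]
    simpa using hw
  have hR0 : 0 < R := lt_trans one_pos hR1
  set D := Metric.ball (0:ℂ) R with hD
  have hball : ∀ {lam : ℂ}, lam ∈ D → ‖lam • w‖ < 1 := by
    intro lam hlam
    rw [Metric.mem_ball, dist_zero_right] at hlam
    calc ‖lam • w‖ = ‖lam‖ * ‖w‖ := norm_smul _ _
      _ < R * ‖w‖ := by exact mul_lt_mul_of_pos_right hlam hw0
      _ = 1 := by rw [hRdef, inv_mul_cancel₀ hw0.ne']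
  have hballle : ∀ {lam : ℂ}, lam ∈ D → ‖lam‖ * ‖w‖ ≤ 1 := by
    intro lam hlam
    have := hball hlam
    rw [norm_smul] at this
    exact le_of_lt this
  obtain ⟨u, humem, hulim⟩ := exists_approx DA g
  set φ : ℂ → ℂ := fun lam => DA.ev g (lam • w) with hφ
  set Φ : ℕ → ℂ → ℂ := fun n lam => DA.ev (u n) (lam • w) with hΦ
  -- differentiability of approximants
  have hdiff : ∀ x ∈ span ℂ {x : H | ∃ v, ‖v‖ < 1 ∧ x = DA.ker v},
      DifferentiableOn ℂ (fun lam => DA.ev x (lam • w)) D := by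
    intro x hx
    induction hx using Submodule.span_induction with
    | mem x hxm =>
      obtain ⟨v, hv, rfl⟩ := hxm
      set a : ℂ := ∑ j, w j * conj (v j) with ha
      have hEq : Set.EqOn (fun lam => DA.ev (DA.ker v) (lam • w))
          (fun lam => (1 - lam * a)⁻¹) D := by
        intro lam hlam
        have := DA.kernel (lam • w) v (hball hlam) hv
        simp only [this]
        congr 1
        have : ∀ j, (lam • w) j * conj (v j) = lam * (w j * conj (v j)) := by
          intro j
          have : (lam • w) j = lam * w j := rfl
          rw [this]; ring
        rw [Finset.sum_congr rfl (fun j _ => this j), ← Finset.mul_sum, ha]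
      have ha2 : a = (inner ℂ v w : ℂ) := by
        rw [ha]
        simp only [PiLp.inner_apply, RCLike.inner_apply]
      have haub : ‖a‖ ≤ ‖v‖ * ‖w‖ := by rw [ha2]; exact norm_inner_le_norm v w
      have hane : ∀ lam ∈ D, 1 - lam * a ≠ 0 := by
        intro lam hlam h
        have h1 : (1:ℂ) = lam * a := sub_eq_zero.mp h
        have h2 : ‖lam * a‖ < 1 := by
          rw [norm_mul]
          calc ‖lam‖ * ‖a‖ ≤ ‖lam‖ * (‖v‖ * ‖w‖) :=
                mul_le_mul_of_nonneg_left haub (norm_nonneg _)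
            _ = (‖lam‖ * ‖w‖) * ‖v‖ := by ring
            _ ≤ 1 * ‖v‖ := mul_le_mul_of_nonneg_right (hballle hlam) (norm_nonneg _)
            _ = ‖v‖ := one_mul _
            _ < 1 := hv
        rw [← h1] at h2
        simp at h2
      have hd : DifferentiableOn ℂ (fun lam : ℂ => (1 - lam * a)⁻¹) D := by
        apply DifferentiableOn.inv
        · exact (differentiableOn_const 1).sub ((differentiable_id.mul_const a).differentiableOn)
        · exact hane
      exact hd.congr hEq
    | zero =>
      simp only [map_zero, Pi.zero_apply]
      exact differentiableOn_const 0
    | add x y hxm hym hdx hdy =>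
      simp only [map_add, Pi.add_apply]
      exact hdx.add hdy
    | smul c x hxm hdx =>
      simp only [map_smul, Pi.smul_apply, smul_eq_mul]
      exact hdx.const_mul c
  have hΦdiff : ∀ n, DifferentiableOn ℂ (Φ n) D := fun n => hdiff _ (humem n)
  have hTLU : TendstoLocallyUniformlyOn Φ φ atTop D := by
    rw [tendstoLocallyUniformlyOn_iff_forall_isCompact Metric.isOpen_ball]
    intro K hKD hK
    rcases K.eq_empty_or_nonempty with rfl | hne
    · exact tendstoUniformlyOn_empty
    obtain ⟨lam0, hlam0K, hmax⟩ := hK.exists_isMaxOn hne continuous_norm.continuousOn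
    set ρ : ℝ := ‖lam0‖ * ‖w‖ with hρ
    have hρ1 : ρ < 1 := by
      have := hball (hKD hlam0K)
      rwa [norm_smul] at this
    set C : ℝ := Real.sqrt ((1 - ρ ^ 2)⁻¹) with hC
    have hC0 : 0 ≤ C := Real.sqrt_nonneg _
    rw [Metric.tendstoUniformlyOn_iff]
    intro δ hδ
    have hq : 0 < δ / (C + 1) := by positivity
    obtain ⟨N, hN⟩ := Metric.tendsto_atTop.mp hulim (δ / (C + 1)) hq
    rw [eventually_atTop]
    refine ⟨N, fun n hn lam hlamK => ?_⟩
    have hlamD : lam ∈ D := hKD hlamK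
    have hkb : ‖DA.ker (lam • w)‖ ≤ C := by
      apply ker_norm_le DA _ hρ1
      rw [norm_smul, hρ]
      exact mul_le_mul_of_nonneg_right (hmax hlamK) (norm_nonneg _)
    have hdist : dist (φ lam) (Φ n lam) = ‖DA.ev (g - u n) (lam • w)‖ := by
      rw [dist_eq_norm]
      congr 1
      simp [hφ, hΦ, map_sub]
    rw [hdist, DA.repro _ (hball hlamD)]
    calc ‖(inner ℂ (DA.ker (lam • w)) (g - u n) : ℂ)‖
        ≤ ‖DA.ker (lam • w)‖ * ‖g - u n‖ := norm_inner_le_norm _ _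
      _ ≤ C * ‖g - u n‖ := mul_le_mul_of_nonneg_right hkb (norm_nonneg _)
      _ = C * dist (u n) g := by rw [dist_comm, dist_eq_norm]
      _ < (C + 1) * (δ / (C + 1)) := by
          apply mul_lt_mul' (le_of_lt (lt_add_one C)) (hN n hn) dist_nonneg
          linarith
      _ = δ := by field_simp
  have hφdiff : DifferentiableOn ℂ φ D :=
    hTLU.differentiableOn (Eventually.of_forall hΦdiff) Metric.isOpen_ball
  have hφan : AnalyticOnNhd ℂ φ D := hφdiff.analyticOnNhd Metric.isOpen_ball
  have h0D : (0:ℂ) ∈ D := Metric.mem_ball_self hR0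
  have hev0 : φ =ᶠ[nhds (0:ℂ)] 0 := by
    refine Filter.eventuallyEq_of_mem
      (Metric.ball_mem_nhds (0:ℂ) (by positivity : (0:ℝ) < ε / ‖w‖)) ?_
    intro lam hlam
    rw [Metric.mem_ball, dist_zero_right] at hlam
    have : ‖lam • w‖ < ε := by
      rw [norm_smul]
      calc ‖lam‖ * ‖w‖ < (ε / ‖w‖) * ‖w‖ := mul_lt_mul_of_pos_right hlam hw0
        _ = ε := by field_simp
    simpa [hφ] using h0 _ this
  have hEqOn : Set.EqOn φ 0 D :=
    hφan.eqOn_zero_of_preconnected_of_eventuallyEq_zero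
      (convex_ball (0:ℂ) R).isPreconnected h0D hev0
  have h1D : (1:ℂ) ∈ D := by
    rw [Metric.mem_ball, dist_zero_right]
    simpa using hR1
  have := hEqOn h1D
  simpa [hφ] using this


section MonAlg

variable (Mz : Fin d → H →L[ℂ] H) (mon : (Fin d →₀ ℕ) → H)

/-- evaluation of a power of a coordinate multiplier -/
lemma ev_pow (hMz : ∀ j (f : H) z, ‖z‖ < 1 → DA.ev (Mz j f) z = z j * DA.ev f z)
    (j : Fin d) (n : ℕ) (x : H) (z : EuclideanSpace ℂ (Fin d)) (hz : ‖z‖ < 1) :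
    DA.ev ((Mz j ^ n) x) z = z j ^ n * DA.ev x z := by
  induction n with
  | zero => simp [ContinuousLinearMap.one_apply]
  | succ n ih =>
    rw [pow_succ', ContinuousLinearMap.mul_apply, hMz j _ z hz, ih, pow_succ']
    ring

/-- the multioperator `P J` -/
noncomputable def Pop (J : Fin d →₀ ℕ) : H →L[ℂ] H :=
  ((List.finRange d).map fun j => Mz j ^ (J j)).prod

lemma ev_Pop (hMz : ∀ j (f : H) z, ‖z‖ < 1 → DA.ev (Mz j f) z = z j * DA.ev f z)
    (J : Fin d →₀ ℕ) (x : H) (z : EuclideanSpace ℂ (Fin d)) (hz : ‖z‖ < 1) :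
    DA.ev (Pop Mz J x) z = (∏ r, z r ^ (J r)) * DA.ev x z := by
  have key : ∀ l : List (Fin d),
      DA.ev ((((l.map fun j => Mz j ^ (J j))).prod) x) z
        = ((l.map fun j => z j ^ (J j)).prod) * DA.ev x z := by
    intro l
    induction l with
    | nil => simp [ContinuousLinearMap.one_apply]
    | cons a l ih =>
      simp only [List.map_cons, List.prod_cons, ContinuousLinearMap.mul_apply]
      rw [ev_pow DA Mz hMz a _ _ z hz, ih]
      ring
  rw [Pop, key (List.finRange d)]
  have h : (List.map (fun j => z j ^ (J j)) (List.finRange d)).prod = ∏ r, z r ^ (J r) := by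
    rw [← List.ofFn_eq_map, List.prod_ofFn]
  rw [h]

lemma Pop_mon (hMz : ∀ j (f : H) z, ‖z‖ < 1 → DA.ev (Mz j f) z = z j * DA.ev f z)
    (hmon : ∀ (I : Fin d →₀ ℕ) z, ‖z‖ < 1 → DA.ev (mon I) z = ∏ j, (z j) ^ (I j))
    (J K : Fin d →₀ ℕ) : Pop Mz J (mon K) = mon (K + J) := by
  apply sep_eq DA
  intro z hz
  rw [ev_Pop DA Mz hMz J _ z hz, hmon K z hz, hmon (K + J) z hz]
  rw [← Finset.prod_mul_distrib]
  apply Finset.prod_congr rfl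
  intro r _
  rw [Finsupp.add_apply, pow_add]
  ring

lemma Pop_mem (M : Submodule ℂ H) (hMinv : ∀ j, ∀ x ∈ M, Mz j x ∈ M)
    (J : Fin d →₀ ℕ) (x : H) (hx : x ∈ M) : Pop Mz J x ∈ M := by
  have hpow : ∀ (j : Fin d) (n : ℕ) (y : H), y ∈ M → (Mz j ^ n) y ∈ M := by
    intro j n
    induction n with
    | zero => intro y hy; simpa [ContinuousLinearMap.one_apply] using hy
    | succ n ih =>
      intro y hy
      rw [pow_succ', ContinuousLinearMap.mul_apply]
      exact hMinv j _ (ih y hy)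
  have key : ∀ l : List (Fin d), ∀ y ∈ M, (((l.map fun j => Mz j ^ (J j))).prod) y ∈ M := by
    intro l
    induction l with
    | nil => intro y hy; simpa [ContinuousLinearMap.one_apply] using hy
    | cons a l ih =>
      intro y hy
      simp only [List.map_cons, List.prod_cons, ContinuousLinearMap.mul_apply]
      exact hpow a _ _ (ih y hy)
  exact key (List.finRange d) x hx

lemma mon_single_pow
    (hmon : ∀ (I : Fin d →₀ ℕ) z, ‖z‖ < 1 → DA.ev (mon I) z = ∏ j, (z j) ^ (I j))
    (j : Fin d) (n : ℕ) (z : EuclideanSpace ℂ (Fin d)) (hz : ‖z‖ < 1) :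
    DA.ev (mon (Finsupp.single j n)) z = z j ^ n := by
  rw [hmon _ z hz]
  rw [Finset.prod_eq_single j]
  · simp
  · intro r _ hr
    rw [Finsupp.single_apply, if_neg (fun h => hr h.symm), pow_zero]
  · simp

lemma Mz_mon (hMz : ∀ j (f : H) z, ‖z‖ < 1 → DA.ev (Mz j f) z = z j * DA.ev f z)
    (hmon : ∀ (I : Fin d →₀ ℕ) z, ‖z‖ < 1 → DA.ev (mon I) z = ∏ j, (z j) ^ (I j))
    (j : Fin d) (I : Fin d →₀ ℕ) :
    Mz j (mon I) = mon (I + Finsupp.single j 1) := by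
  apply sep_eq DA
  intro z hz
  rw [hMz j _ z hz, hmon I z hz, hmon _ z hz]
  have h1 : ∀ r : Fin d, z r ^ ((I + Finsupp.single j 1 : Fin d →₀ ℕ) r)
      = z r ^ (I r) * z r ^ ((Finsupp.single j 1 : Fin d →₀ ℕ) r) := by
    intro r
    rw [Finsupp.add_apply, pow_add]
  rw [Finset.prod_congr rfl (fun r _ => h1 r), Finset.prod_mul_distrib]
  have h2 : (∏ r, z r ^ ((Finsupp.single j 1 : Fin d →₀ ℕ) r)) = z j := by
    rw [Finset.prod_eq_single j]
    · simp
    · intro r _ hr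
      rw [Finsupp.single_apply, if_neg (fun h => hr h.symm), pow_zero]
    · simp
  rw [h2]
  ring

/-- the reduction: every monomial lies in `span(small monomials) ⊔ M` -/
lemma mon_mem_sup
    (hMz : ∀ j (f : H) z, ‖z‖ < 1 → DA.ev (Mz j f) z = z j * DA.ev f z)
    (hmon : ∀ (I : Fin d →₀ ℕ) z, ‖z‖ < 1 → DA.ev (mon I) z = ∏ j, (z j) ^ (I j))
    (M : Submodule ℂ H) (hMinv : ∀ j, ∀ x ∈ M, Mz j x ∈ M) (A : ℕ)
    (hpoly : ∀ j : Fin d, ∃ f ∈ M, ∃ p : Polynomial ℂ, p ≠ 0 ∧ p.natDegree ≤ A ∧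
      ∀ z, ‖z‖ < 1 → DA.ev f z = p.eval (z j))
    (I : Fin d →₀ ℕ) :
    mon I ∈ (span ℂ {x : H | ∃ I : Fin d →₀ ℕ, (∀ r, I r < A) ∧ x = mon I}) ⊔ M := by
  set Fm := span ℂ {x : H | ∃ I : Fin d →₀ ℕ, (∀ r, I r < A) ∧ x = mon I} with hFm
  have key : ∀ n : ℕ, ∀ I : Fin d →₀ ℕ, (∑ r, I r) = n → mon I ∈ Fm ⊔ M := by
    intro n
    induction n using Nat.strong_induction_on with
    | _ n ih =>
      intro I hIdeg
      by_cases hall : ∀ r, I r < A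
      · exact Submodule.mem_sup_left (subset_span ⟨I, hall, rfl⟩)
      push_neg at hall
      obtain ⟨j, hj⟩ := hall
      obtain ⟨f, hfM, p, hp0, hpdeg, hpev⟩ := hpoly j
      set m := p.natDegree with hm
      have hmIj : m ≤ I j := le_trans hpdeg hj
      set J : Fin d →₀ ℕ := I - Finsupp.single j m with hJ
      have hIJ : J + Finsupp.single j m = I := by
        ext r
        rw [Finsupp.add_apply, hJ, Finsupp.tsub_apply, Finsupp.single_apply]
        by_cases hr : j = r
        · subst hr; simp [Nat.sub_add_cancel hmIj]
        · simp [hr]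
      have hf_eq : f = ∑ n ∈ Finset.range (m + 1), p.coeff n • mon (Finsupp.single j n) := by
        apply sep_eq DA
        intro z hz
        rw [hpev z hz, Polynomial.eval_eq_sum_range]
        rw [map_sum]
        simp only [Finset.sum_apply]
        apply Finset.sum_congr rfl
        intro n _
        rw [map_smul]
        simp only [Pi.smul_apply, smul_eq_mul]
        rw [mon_single_pow DA mon hmon j n z hz]
      have hcm : p.coeff m ≠ 0 := by
        rw [hm]
        exact Polynomial.leadingCoeff_ne_zero.mpr hp0
      have e1 : Pop Mz J (mon (Finsupp.single j m)) = mon I := by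
        rw [Pop_mon DA Mz mon hMz hmon]
        congr 1
        rw [add_comm]
        exact hIJ
      have e2 : ∀ n : ℕ, Pop Mz J (mon (Finsupp.single j n)) = mon (J + Finsupp.single j n) := by
        intro n
        rw [Pop_mon DA Mz mon hMz hmon]
        congr 1
        rw [add_comm]
      have happ : Pop Mz J f
          = p.coeff m • mon I
            + ∑ n ∈ Finset.range m, p.coeff n • mon (J + Finsupp.single j n) := by
        rw [hf_eq, map_sum, Finset.sum_range_succ]
        simp only [map_smul]
        rw [e1]
        rw [Finset.sum_congr rfl (fun n _ => by rw [e2 n] :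
          ∀ n ∈ Finset.range m, p.coeff n • Pop Mz J (mon (Finsupp.single j n))
            = p.coeff n • mon (J + Finsupp.single j n))]
        rw [add_comm]
      have hPf : Pop Mz J f ∈ Fm ⊔ M :=
        Submodule.mem_sup_right (Pop_mem Mz M hMinv J f hfM)
      have hsum_add : ∀ (K : Fin d →₀ ℕ) (n : ℕ),
          (∑ r, (K + Finsupp.single j n) r) = (∑ r, K r) + n := by
        intro K n
        simp only [Finsupp.add_apply]
        rw [Finset.sum_add_distrib]
        congr 1
        rw [Finset.sum_eq_single j]
        · simp
        · intro r _ hr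
          rw [Finsupp.single_apply, if_neg (fun h => hr h.symm)]
        · simp
      have hdegJ : ∀ n < m, (∑ r, (J + Finsupp.single j n) r) < ∑ r, I r := by
        intro n hn
        rw [hsum_add]
        have h2 : (∑ r, I r) = (∑ r, J r) + m := by
          rw [← hIJ]
          exact hsum_add J m
        omega
      have hrec : ∀ n ∈ Finset.range m, mon (J + Finsupp.single j n) ∈ Fm ⊔ M := by
        intro n hn
        rw [Finset.mem_range] at hn
        exact ih _ (hIdeg ▸ hdegJ n hn) _ rfl
      have hkey : p.coeff m • mon I
          = Pop Mz J f - ∑ n ∈ Finset.range m, p.coeff n • mon (J + Finsupp.single j n) := by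
        rw [happ]
        abel
      have hmem : p.coeff m • mon I ∈ Fm ⊔ M := by
        rw [hkey]
        exact Submodule.sub_mem _ hPf
          (Submodule.sum_mem _ (fun n hn => Submodule.smul_mem _ _ (hrec n hn)))
      have := Submodule.smul_mem _ (p.coeff m)⁻¹ hmem
      rwa [smul_smul, inv_mul_cancel₀ hcm, one_smul] at this
  exact key _ I rfl

end MonAlg


lemma coord_le_norm (w : EuclideanSpace ℂ (Fin d)) (j : Fin d) : ‖w j‖ ≤ ‖w‖ := by
  have h1 : ‖w j‖ ^ 2 ≤ ‖w‖ ^ 2 := by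
    rw [EuclideanSpace.norm_eq, Real.sq_sqrt (by positivity)]
    exact Finset.single_le_sum (f := fun i => ‖w i‖ ^ 2) (fun i _ => by positivity) (Finset.mem_univ j)
  nlinarith [norm_nonneg (w j), norm_nonneg w]

/-- main orthogonality lemma: a vector orthogonal to all monomials is zero -/
lemma eq_zero_of_inner_mon (Mz : Fin d → H →L[ℂ] H) (mon : (Fin d →₀ ℕ) → H)
    (hMz : ∀ j (f : H) z, ‖z‖ < 1 → DA.ev (Mz j f) z = z j * DA.ev f z)
    (hmon : ∀ (I : Fin d →₀ ℕ) z, ‖z‖ < 1 → DA.ev (mon I) z = ∏ j, (z j) ^ (I j))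
    (g : H) (hg : ∀ I : Fin d →₀ ℕ, (inner ℂ (mon I) g : ℂ) = 0) : g = 0 := by
  set C : ℝ := ∑ j, ‖Mz j‖ with hC
  have hC0 : 0 ≤ C := Finset.sum_nonneg (fun j _ => norm_nonneg _)
  set ε : ℝ := (1 + C)⁻¹ with hε
  have hεpos : 0 < ε := by positivity
  apply eq_zero_of_ev_small DA hεpos g
  intro w hw
  have hw1 : ‖w‖ < 1 := by
    apply lt_of_lt_of_le hw
    rw [hε]
    apply inv_le_one_of_one_le₀
    linarith
  -- the Neumann series operator
  set T : H →L[ℂ] H := ∑ j, (conj (w j)) • Mz j with hT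
  have hTnorm : ‖T‖ < 1 := by
    have h1 : ‖T‖ ≤ ∑ j, ‖w j‖ * ‖Mz j‖ := by
      refine le_trans (norm_sum_le _ _) (Finset.sum_le_sum fun j _ => ?_)
      rw [norm_smul, RCLike.norm_conj]
    have h2 : (∑ j, ‖w j‖ * ‖Mz j‖) ≤ ‖w‖ * C := by
      rw [hC, Finset.mul_sum]
      exact Finset.sum_le_sum fun j _ =>
        mul_le_mul_of_nonneg_right (coord_le_norm w j) (norm_nonneg _)
    have h3 : ‖w‖ * C < 1 := by
      have h4 : ‖w‖ * (1 + C) < ε * (1 + C) := by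
        apply mul_lt_mul_of_pos_right hw
        linarith
      have h5 : ε * (1 + C) = 1 := by
        rw [hε]
        field_simp
      nlinarith [norm_nonneg w]
    linarith
  have hbound : ∀ n : ℕ, ‖(T ^ n) (mon 0)‖ ≤ ‖T‖ ^ n * ‖mon 0‖ := by
    intro n
    induction n with
    | zero => simp [ContinuousLinearMap.one_apply]
    | succ n ih =>
      rw [pow_succ', ContinuousLinearMap.mul_apply]
      calc ‖T ((T ^ n) (mon 0))‖ ≤ ‖T‖ * ‖(T ^ n) (mon 0)‖ := T.le_opNorm _
        _ ≤ ‖T‖ * (‖T‖ ^ n * ‖mon 0‖) :=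
            mul_le_mul_of_nonneg_left ih (norm_nonneg _)
        _ = ‖T‖ ^ (n + 1) * ‖mon 0‖ := by rw [pow_succ']; ring
  have hsummable : Summable (fun n : ℕ => (T ^ n) (mon 0)) := by
    apply Summable.of_norm_bounded (g := fun n => ‖T‖ ^ n * ‖mon 0‖)
    · exact (summable_geometric_of_lt_one (norm_nonneg T) hTnorm).mul_right _
    · exact hbound
  set v : H := ∑' n, (T ^ n) (mon 0) with hv
  -- ev of T
  have hevT : ∀ (x : H) z, ‖z‖ < 1 →
      DA.ev (T x) z = (∑ j, z j * conj (w j)) * DA.ev x z := by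
    intro x z hz
    rw [hT]
    rw [ContinuousLinearMap.sum_apply]
    rw [map_sum]
    simp only [Finset.sum_apply, ContinuousLinearMap.smul_apply, map_smul, Pi.smul_apply,
      smul_eq_mul]
    rw [Finset.sum_mul]
    apply Finset.sum_congr rfl
    intro j _
    rw [hMz j x z hz]
    ring
  have hevTn : ∀ (n : ℕ) z, ‖z‖ < 1 →
      DA.ev ((T ^ n) (mon 0)) z = (∑ j, z j * conj (w j)) ^ n := by
    intro n z hz
    induction n with
    | zero =>
      simp only [pow_zero, ContinuousLinearMap.one_apply]
      rw [hmon 0 z hz]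
      simp
    | succ n ih =>
      rw [pow_succ', ContinuousLinearMap.mul_apply, hevT _ z hz, ih, pow_succ']
  -- v = ker w
  have hveq : v = DA.ker w := by
    apply sep_eq DA
    intro z hz
    set t : ℂ := ∑ j, z j * conj (w j) with ht
    have htnorm : ‖t‖ < 1 := by
      have h1 : t = (inner ℂ w z : ℂ) := by
        rw [ht]
        simp only [PiLp.inner_apply, RCLike.inner_apply]
      rw [h1]
      calc ‖(inner ℂ w z : ℂ)‖ ≤ ‖w‖ * ‖z‖ := norm_inner_le_norm _ _
        _ ≤ ‖w‖ * 1 := mul_le_mul_of_nonneg_left (le_of_lt hz) (norm_nonneg _)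
        _ = ‖w‖ := mul_one _
        _ < 1 := hw1
    have hrhs : DA.ev (DA.ker w) z = (1 - t)⁻¹ := DA.kernel z w hz hw1
    have hlhs : DA.ev v z = (1 - t)⁻¹ := by
      rw [DA.repro z hz, hv]
      have hmap : (inner ℂ (DA.ker z) (∑' (n : ℕ), (T ^ n) (mon 0)) : ℂ)
          = ∑' (n : ℕ), (inner ℂ (DA.ker z) ((T ^ n) (mon 0)) : ℂ) := by
        have := (innerSL ℂ (DA.ker z)).map_tsum hsummable
        simpa using this
      rw [hmap]
      have : ∀ n : ℕ, (inner ℂ (DA.ker z) ((T ^ n) (mon 0)) : ℂ) = t ^ n := by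
        intro n
        have h := hevTn n z hz
        rw [DA.repro z hz] at h
        simpa using h
      rw [tsum_congr this]
      exact tsum_geometric_of_norm_lt_one htnorm
    rw [hlhs, hrhs]
  -- membership of partial sums in span of monomials
  have hmonspan : ∀ x ∈ span ℂ (Set.range mon), T x ∈ span ℂ (Set.range mon) := by
    intro x hx
    induction hx using Submodule.span_induction with
    | mem x hxm =>
      obtain ⟨I, rfl⟩ := hxm
      rw [hT, ContinuousLinearMap.sum_apply]
      apply Submodule.sum_mem
      intro j _
      rw [ContinuousLinearMap.smul_apply]
      apply Submodule.smul_mem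
      rw [Mz_mon DA Mz mon hMz hmon]
      exact subset_span ⟨_, rfl⟩
    | zero => simp only [map_zero]; exact Submodule.zero_mem _
    | add x y hxm hym hx hy => rw [map_add]; exact Submodule.add_mem _ hx hy
    | smul c x hxm hx => rw [map_smul]; exact Submodule.smul_mem _ _ hx
  have hTn_mem : ∀ n : ℕ, (T ^ n) (mon 0) ∈ span ℂ (Set.range mon) := by
    intro n
    induction n with
    | zero =>
      simp only [pow_zero, ContinuousLinearMap.one_apply]
      exact subset_span ⟨0, rfl⟩
    | succ n ih =>
      rw [pow_succ', ContinuousLinearMap.mul_apply]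
      exact hmonspan _ ih
  -- g orthogonal to the span
  have hinner : ∀ x ∈ span ℂ (Set.range mon), (inner ℂ x g : ℂ) = 0 := by
    intro x hx
    induction hx using Submodule.span_induction with
    | mem x hxm => obtain ⟨I, rfl⟩ := hxm; exact hg I
    | zero => exact inner_zero_left g
    | add x y hxm hym hx hy => rw [inner_add_left, hx, hy, add_zero]
    | smul c x hxm hx => rw [inner_smul_left, hx, mul_zero]
  -- conclude
  have hvg : (inner ℂ v g : ℂ) = 0 := by
    have htend : Tendsto (fun N => ∑ n ∈ Finset.range N, (T ^ n) (mon 0)) atTop (nhds v) :=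
      hsummable.hasSum.tendsto_sum_nat
    have hcont : Tendsto (fun N => (inner ℂ (∑ n ∈ Finset.range N, (T ^ n) (mon 0)) g : ℂ))
        atTop (nhds (inner ℂ v g : ℂ)) :=
      ((continuous_id.inner continuous_const).tendsto v).comp htend
    have hzero : ∀ N, (inner ℂ (∑ n ∈ Finset.range N, (T ^ n) (mon 0)) g : ℂ) = 0 := by
      intro N
      exact hinner _ (Submodule.sum_mem _ (fun n _ => hTn_mem n))
    rw [funext hzero] at hcont
    exact tendsto_nhds_unique hcont tendsto_const_nhds
  rw [DA.repro w hw1, ← hveq]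
  exact hvg


end Stmt10Aux

/-- half of Lemma 2: if a closed invariant subspace `M ⊆ H²_d` contains,
for each `j`, a nonzero one-variable polynomial `p_j(z_j)` of degree at most `A`, then
`M` has finite codimension; indeed `H²_d / M` is spanned by the images of the monomials
`z^I` with all exponents `< A`. -/
theorem stmt10 {d : ℕ} {H : Type}
    [NormedAddCommGroup H] [InnerProductSpace ℂ H] [CompleteSpace H]
    (DA : DruryArveson d H)
    (Mz : Fin d → H →L[ℂ] H)
    (hMz : ∀ j (f : H) z, ‖z‖ < 1 → DA.ev (Mz j f) z = z j * DA.ev f z)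
    (mon : (Fin d →₀ ℕ) → H)
    (hmon : ∀ (I : Fin d →₀ ℕ) z, ‖z‖ < 1 → DA.ev (mon I) z = ∏ j, (z j) ^ (I j))
    (M : Submodule ℂ H) (hMc : IsClosed (M : Set H))
    (hMinv : ∀ j, ∀ x ∈ M, Mz j x ∈ M)
    (A : ℕ)
    (hpoly : ∀ j : Fin d, ∃ f ∈ M, ∃ p : Polynomial ℂ, p ≠ 0 ∧ p.natDegree ≤ A ∧
      ∀ z, ‖z‖ < 1 → DA.ev f z = p.eval (z j)) :
    FiniteDimensional ℂ (H ⧸ M) ∧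
      Submodule.span ℂ
        (M.mkQ '' {x : H | ∃ I : Fin d →₀ ℕ, (∀ r, I r < A) ∧ x = mon I}) = ⊤ := by
  classical
  set S := {x : H | ∃ I : Fin d →₀ ℕ, (∀ r, I r < A) ∧ x = mon I} with hS
  -- S is finite
  have hSfin : S.Finite := by
    have h3 : {f : Fin d → ℕ | ∀ r, f r < A}.Finite := by
      apply (Set.Finite.pi (fun _ : Fin d => Set.finite_Iio A)).subset
      intro f hf r _
      exact hf r
    have h1 : {I : Fin d →₀ ℕ | ∀ r, I r < A}.Finite := by
      have := h3.preimage
        (Set.injOn_of_injective (DFunLike.coe_injective (F := Fin d →₀ ℕ)))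
      exact this
    have h2 : S ⊆ mon '' {I : Fin d →₀ ℕ | ∀ r, I r < A} := by
      rintro x ⟨I, hI, rfl⟩
      exact ⟨I, hI, rfl⟩
    exact (h1.image mon).subset h2
  set Fm := Submodule.span ℂ S with hFm
  -- the key sup property
  have hsup : Fm ⊔ M = ⊤ := by
    rw [eq_top_iff]
    rintro x -
    haveI : CompleteSpace M := hMc.completeSpace_coe
    set PrL : H →L[ℂ] H :=
      ContinuousLinearMap.id ℂ H - M.subtypeL.comp (M.orthogonalProjectionOnto) with hPrL
    have hPr_eq : ∀ y : H, PrL y = y - (M.orthogonalProjectionOnto y : H) := by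
      intro y; simp [hPrL]
    have hPr_orth : ∀ y : H, PrL y ∈ Mᗮ := by
      intro y
      rw [hPr_eq]
      exact Submodule.sub_starProjection_mem_orthogonal (K := M) y
    set F2 := Submodule.span ℂ (PrL '' S) with hF2
    haveI : FiniteDimensional ℂ F2 := FiniteDimensional.span_of_finite ℂ (hSfin.image _)
    have hF2O : F2 ≤ Mᗮ := by
      rw [hF2, Submodule.span_le]
      rintro y ⟨s, _, rfl⟩
      exact hPr_orth s
    have hF2sup : F2 ≤ Fm ⊔ M := by
      rw [hF2, Submodule.span_le]
      rintro y ⟨s, hs, rfl⟩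
      rw [hPr_eq]
      exact Submodule.sub_mem _
        (Submodule.mem_sup_left (Submodule.subset_span hs))
        (Submodule.mem_sup_right (M.orthogonalProjectionOnto s).2)
    have hF2mem : ∀ a ∈ Fm, PrL a ∈ F2 := by
      intro a ha
      rw [hF2, hFm] at *
      have himg := Submodule.span_image (s := S) (PrL : H →ₗ[ℂ] H)
      rw [ContinuousLinearMap.coe_coe] at himg
      rw [himg]
      exact Submodule.mem_map_of_mem ha
    -- every element of Mᗮ lies in F2
    have hG : ∀ g ∈ Mᗮ, g ∈ F2 := by
      intro g hgO
      set g' := g - (F2.orthogonalProjectionOnto g : H) with hg'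
      have hg'1 : g' ∈ F2ᗮ := Submodule.sub_starProjection_mem_orthogonal (K := F2) g
      have hg'2 : g' ∈ Mᗮ :=
        Submodule.sub_mem _ hgO (hF2O (F2.orthogonalProjectionOnto g).2)
      have hmonI : ∀ I : Fin d →₀ ℕ, (inner ℂ (mon I) g' : ℂ) = 0 := by
        intro I
        have hmm := Stmt10Aux.mon_mem_sup DA Mz mon hMz hmon M hMinv A hpoly I
        obtain ⟨a, haF, b, hbM, hab⟩ := Submodule.mem_sup.mp hmm
        rw [← hab, inner_add_left]
        have hb0 : (inner ℂ b g' : ℂ) = 0 :=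
          (Submodule.mem_orthogonal _ _).mp hg'2 b hbM
        have ha0 : (inner ℂ a g' : ℂ) = 0 := by
          have hsplit : a = PrL a + (M.orthogonalProjectionOnto a : H) := by
            rw [hPr_eq]; abel
          rw [hsplit, inner_add_left]
          have h1 : (inner ℂ (PrL a) g' : ℂ) = 0 :=
            (Submodule.mem_orthogonal _ _).mp hg'1 _ (hF2mem a haF)
          have h2 : (inner ℂ ((M.orthogonalProjectionOnto a : H)) g' : ℂ) = 0 :=
            (Submodule.mem_orthogonal _ _).mp hg'2 _ (M.orthogonalProjectionOnto a).2
          rw [h1, h2, add_zero]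
        rw [ha0, hb0, add_zero]
      have hg'0 : g' = 0 := Stmt10Aux.eq_zero_of_inner_mon DA Mz mon hMz hmon g' hmonI
      have : g = (F2.orthogonalProjectionOnto g : H) := by
        rw [← sub_eq_zero]; exact hg'0
      rw [this]
      exact (F2.orthogonalProjectionOnto g).2
    have h6 : PrL x ∈ Fm ⊔ M := hF2sup (hG _ (hPr_orth x))
    have hx : x = PrL x + (M.orthogonalProjectionOnto x : H) := by
      rw [hPr_eq]; abel
    rw [hx]
    exact Submodule.add_mem _ h6 (Submodule.mem_sup_right (M.orthogonalProjectionOnto x).2)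
  have hspan : Submodule.span ℂ (M.mkQ '' S) = ⊤ := by
    rw [Submodule.span_image, Submodule.map_mkQ_eq_top, sup_comm]
    exact hsup
  refine ⟨?_, hspan⟩
  apply Module.finite_def.mpr
  rw [← hspan]
  exact Submodule.fg_def.mpr ⟨_, hSfin.image _, rfl⟩
end

section
/- Let M ⊂ H²(𝔻²) be a closed submodule of the Hardy space of the bidisk (invariant under multiplication by both coordinates z and ω), write M_z = [[R_z, J_z],[0, S_z]] with respect to H² = M ⊕ M^⊥. Then the kernel of J_z* restricted to M ⊖ zM equals M ∩ H_ω, the set of functions in M depending only on ω. -/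
open scoped ComplexConjugate

/-- The Hardy space `H²(𝔻²)` of the bidisk, presented as the reproducing kernel Hilbert
space on `𝔻 × 𝔻` with kernel `K((z,ω),(a,b)) = ((1 - z ā)(1 - ω b̄))⁻¹`. -/
structure HardyBidisk (H : Type)
    [NormedAddCommGroup H] [InnerProductSpace ℂ H] [CompleteSpace H] where
  ev : H →ₗ[ℂ] (ℂ × ℂ → ℂ)
  ker : ℂ × ℂ → H
  sep : ∀ f : H,
    (∀ p : ℂ × ℂ, ‖p.1‖ < 1 → ‖p.2‖ < 1 → ev f p = 0) → f = 0
  repro : ∀ w : ℂ × ℂ, ‖w.1‖ < 1 → ‖w.2‖ < 1 →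
    ∀ f : H, ev f w = inner ℂ (ker w) f
  kernel : ∀ z w : ℂ × ℂ, ‖z.1‖ < 1 → ‖z.2‖ < 1 →
    ‖w.1‖ < 1 → ‖w.2‖ < 1 →
    ev (ker w) z = ((1 - z.1 * conj w.1) * (1 - z.2 * conj w.2))⁻¹

/-- for a closed submodule `M ⊆ H²(𝔻²)` (invariant under multiplication by
both coordinates `z`, `ω`), the kernel of `J_z* = P_{M^⊥} M_z*|_M` restricted to
`M ⊖ zM` equals `M ∩ H_ω`, the functions in `M` depending only on `ω`. -/
theorem stmt13 {H : Type}
    [NormedAddCommGroup H] [InnerProductSpace ℂ H] [CompleteSpace H]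
    (HB : HardyBidisk H)
    (Mz Mw : H →L[ℂ] H)
    (hMz : ∀ (f : H) (p : ℂ × ℂ), ‖p.1‖ < 1 → ‖p.2‖ < 1 →
      HB.ev (Mz f) p = p.1 * HB.ev f p)
    (hMw : ∀ (f : H) (p : ℂ × ℂ), ‖p.1‖ < 1 → ‖p.2‖ < 1 →
      HB.ev (Mw f) p = p.2 * HB.ev f p)
    (M : Submodule ℂ H) (hMc : IsClosed (M : Set H))
    (hMinvz : ∀ x ∈ M, Mz x ∈ M) (hMinvw : ∀ x ∈ M, Mw x ∈ M)
    (Hw : Submodule ℂ H)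
    (hHw : ∀ f : H, f ∈ Hw ↔ ∃ g : ℂ → ℂ,
      ∀ p : ℂ × ℂ, ‖p.1‖ < 1 → ‖p.2‖ < 1 → HB.ev f p = g p.2) :
    letI : CompleteSpace ↥M := hMc.completeSpace_coe
    {x : H | x ∈ M ⊓ ((M.map ((Mz : H →L[ℂ] H) : H →ₗ[ℂ] H)))ᗮ ∧
        Mᗮ.orthogonalProjection (ContinuousLinearMap.adjoint Mz x) = 0}
      = ((M ⊓ Hw : Submodule ℂ H) : Set H) := by
  letI : CompleteSpace ↥M := hMc.completeSpace_coe
  -- auxiliary facts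
  have habs : ∀ {z w : ℂ}, ‖z‖ < 1 → ‖w‖ < 1 →
      (1 : ℂ) - z * conj w ≠ 0 := by
    intro z w hz hw h
    have h1 : z * conj w = 1 := by linear_combination -h
    have h2 : ‖z * conj w‖ = 1 := by rw [h1]; simp
    rw [norm_mul, Complex.norm_conj] at h2
    nlinarith [norm_nonneg z, norm_nonneg w]
  have hzero : ‖(0 : ℂ)‖ < 1 := by simp
  -- the kernel identity : ker (a,b) - ker (0,b) = conj a • Mz (ker (a,b))
  have kerid : ∀ {a b : ℂ}, ‖a‖ < 1 → ‖b‖ < 1 →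
      HB.ker (a, b) - HB.ker (0, b) = conj a • Mz (HB.ker (a, b)) := by
    intro a b ha hb
    rw [← sub_eq_zero]
    apply HB.sep
    intro p hp1 hp2
    have e1 := HB.kernel p (a, b) hp1 hp2 ha hb
    have e2 := HB.kernel p (0, b) hp1 hp2 hzero hb
    have e3 := hMz (HB.ker (a, b)) p hp1 hp2
    simp only [map_sub, map_smul, Pi.sub_apply, Pi.smul_apply, smul_eq_mul] at *
    rw [e1, e2, e3, e1]
    have h1 : (1 : ℂ) - p.1 * conj a ≠ 0 := habs hp1 ha
    have h2 : (1 : ℂ) - p.2 * conj b ≠ 0 := habs hp2 hb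
    simp only [map_zero, mul_zero, sub_zero]
    field_simp
    ring
  -- vanishing of `⟪Mz (ker (a,b)), x⟫` for `a ≠ 0` given `x ∈ Hw`-type behaviour
  -- main characterization: adjoint Mz x = 0 ↔ x ∈ Hw
  have key : ∀ x : H, ContinuousLinearMap.adjoint Mz x = 0 ↔ x ∈ Hw := by
    intro x
    constructor
    · intro hx
      rw [hHw]
      refine ⟨fun b => HB.ev x (0, b), ?_⟩
      rintro ⟨a, b⟩ ha hb
      have h1 : (inner ℂ (HB.ker (a, b) - HB.ker (0, b)) x : ℂ)
          = inner ℂ (conj a • Mz (HB.ker (a, b))) x := by rw [kerid ha hb]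
      rw [inner_sub_left, inner_smul_left, ← ContinuousLinearMap.adjoint_inner_right,
        hx, inner_zero_right, mul_zero] at h1
      have hx1 := HB.repro (a, b) ha hb x
      have hx2 := HB.repro (0, b) hzero hb x
      simp only at hx1 hx2 ⊢
      rw [hx1, hx2, sub_eq_zero.mp h1]
    · intro hx
      obtain ⟨g, hg⟩ := (hHw x).mp hx
      set h := ContinuousLinearMap.adjoint Mz x with hh
      -- ev h vanishes off the slice a = 0
      have hv : ∀ p : ℂ × ℂ, ‖p.1‖ < 1 → ‖p.2‖ < 1 →
          p.1 ≠ 0 → HB.ev h p = 0 := by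
        rintro ⟨a, b⟩ ha hb ha0
        have h1 : (inner ℂ (HB.ker (a, b) - HB.ker (0, b)) x : ℂ)
            = inner ℂ (conj a • Mz (HB.ker (a, b))) x := by rw [kerid ha hb]
        have hx1 := HB.repro (a, b) ha hb x
        have hx2 := HB.repro (0, b) hzero hb x
        rw [inner_sub_left, ← hx1, ← hx2, hg (a, b) ha hb, hg (0, b) hzero hb,
          sub_self, inner_smul_left, ← ContinuousLinearMap.adjoint_inner_right] at h1
        have h2 : (inner ℂ (HB.ker (a, b)) h : ℂ) = 0 := by
          rcases mul_eq_zero.mp h1.symm with h' | h'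
          · exact absurd (by simpa using congrArg conj h') ha0
          · exact h'
        rw [HB.repro (a, b) ha hb h, h2]
      -- hence Mz h = 0
      have hMzh : Mz h = 0 := by
        apply HB.sep
        intro p hp1 hp2
        rw [hMz h p hp1 hp2]
        rcases eq_or_ne p.1 0 with h0 | h0
        · rw [h0, zero_mul]
        · rw [hv p hp1 hp2 h0, mul_zero]
      -- hence h = 0
      have : (inner ℂ h h : ℂ) = 0 := by
        rw [hh, ContinuousLinearMap.adjoint_inner_left, hMzh, inner_zero_right]
      exact inner_self_eq_zero.mp this
  -- now prove the set equality
  ext x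
  simp only [Set.mem_setOf_eq, SetLike.mem_coe, Submodule.mem_inf]
  constructor
  · rintro ⟨⟨hxM, hxperp⟩, hproj⟩
    refine ⟨hxM, (key x).mp ?_⟩
    have hmem : ContinuousLinearMap.adjoint Mz x ∈ Mᗮᗮ :=
      Submodule.orthogonalProjectionOnto_eq_zero_iff.mp hproj
    rw [Submodule.orthogonal_orthogonal] at hmem
    have h0 : (inner ℂ (Mz (ContinuousLinearMap.adjoint Mz x)) x : ℂ) = 0 :=
      hxperp _ (Submodule.mem_map_of_mem hmem)
    rw [← ContinuousLinearMap.adjoint_inner_right] at h0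
    exact inner_self_eq_zero.mp h0
  · rintro ⟨hxM, hxHw⟩
    have hz : ContinuousLinearMap.adjoint Mz x = 0 := (key x).mpr hxHw
    refine ⟨⟨hxM, ?_⟩, by rw [hz, map_zero]⟩
    intro u hu
    obtain ⟨m, hm, rfl⟩ := hu
    have : (inner ℂ (Mz m) x : ℂ) = 0 := by
      rw [← ContinuousLinearMap.adjoint_inner_right, hz, inner_zero_right]
    simpa using this
end
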